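/- The K-linear span of the polynomials (ι(a)·X + Y)^r in K[X,Y], as a ranges over all elements of 𝔽, equals W, the span of the monomials X^i Y^{r−i} for admissible i. -/
import Mathlib

open MvPolynomial Finset

lemma dvd_choose_iff_lt {p a b : ℕ} (hp : p.Prime) (ha : a < p) : p ∣ a.choose b ↔ a < b := by
  constructor
  · intro h
    by_contra hab
    push_neg at hab
    have h1 : a.choose b ∣ a.factorial :=
      ⟨b.factorial * (a - b).factorial, by
        rw [← mul_assoc, Nat.choose_mul_factorial_mul_factorial hab]⟩
    have h2 : p ≤ a := (Nat.Prime.dvd_factorial hp).mp (h.trans h1)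
    omega
  · intro h; simp [Nat.choose_eq_zero_of_lt h]

lemma lucas_not_dvd {p n r i : ℕ} (hp : p.Prime) (hi : i ≤ r) (hr : r < p ^ n) :
    ¬ p ∣ r.choose i ↔ ∀ j : ℕ, i / p ^ j % p ≤ r / p ^ j % p := by
  haveI : Fact p.Prime := ⟨hp⟩
  have hi' : i < p ^ n := lt_of_le_of_lt hi hr
  have hmod : r.choose i % p =
      (∏ j ∈ range n, (r / p ^ j % p).choose (i / p ^ j % p)) % p :=
    Choose.choose_modEq_prod_range_choose_nat (p := p) hr hi'
  have hdvd : p ∣ r.choose i ↔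
      p ∣ ∏ j ∈ range n, (r / p ^ j % p).choose (i / p ^ j % p) := by
    rw [Nat.dvd_iff_mod_eq_zero, Nat.dvd_iff_mod_eq_zero, hmod]
  rw [hdvd, hp.prime.dvd_finset_prod_iff]
  push_neg
  constructor
  · intro h j
    by_cases hj : j < n
    · have := h j (mem_range.mpr hj)
      rw [dvd_choose_iff_lt hp (Nat.mod_lt _ hp.pos)] at this
      omega
    · push_neg at hj
      have : i / p ^ j = 0 :=
        Nat.div_eq_of_lt (lt_of_lt_of_le hi' (Nat.pow_le_pow_right hp.one_lt.le hj))
      simp [this]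
  · intro h j _
    rw [dvd_choose_iff_lt hp (Nat.mod_lt _ hp.pos)]
    exact Nat.not_lt.mpr (h j)

lemma span_mem_of_sum_C_mul {K : Type*} [Field K] {σ : Type*}
    {S : Set (MvPolynomial σ K)} {ι : Type*} [Fintype ι] (f : ι → MvPolynomial σ K)
    (hf : ∀ k, f k ∈ Submodule.span K S) (c : ι → K) (d : K) (hd : d ≠ 0)
    (x : MvPolynomial σ K) (h : ∑ k, C (c k) * f k = C d * x) :
    x ∈ Submodule.span K S := by
  have h1 : (∑ k, C (c k) * f k) ∈ Submodule.span K S :=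
    Submodule.sum_mem _ fun k _ => by
      rw [← smul_eq_C_mul]
      exact Submodule.smul_mem _ _ (hf k)
  rw [h] at h1
  have h2 := Submodule.smul_mem _ d⁻¹ h1
  rwa [smul_eq_C_mul, ← mul_assoc, ← map_mul, inv_mul_cancel₀ hd, map_one, one_mul] at h2

set_option maxHeartbeats 1000000 in
/-- **Statement 6.** The `K`-span of the polynomials `(ι a • X + Y)^r`, as `a`
ranges over the finite field `𝔽` of cardinality `p^n`, equals the span `W` of
the monomials `X^i Y^(r-i)` for `i` admissible (base-`p` digits of `i` bounded
by those of `r`). -/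
theorem stmt_7
    (p : ℕ) (hp : p.Prime) (n : ℕ) (hn : 1 ≤ n)
    (𝔽 : Type*) [Field 𝔽] [Fintype 𝔽] (hF : Fintype.card 𝔽 = p ^ n)
    (K : Type*) [Field K] [CharP K p]
    (ι : 𝔽 →+* K)
    (r : ℕ) (hr : r < p ^ n) :
    Submodule.span K
        {P : MvPolynomial (Fin 2) K |
          ∃ a : 𝔽, P = (MvPolynomial.C (ι a) * X 0 + X 1) ^ r} =
      Submodule.span K
        {P : MvPolynomial (Fin 2) K |
          ∃ i : ℕ, i ≤ r ∧ (∀ j : ℕ, i / p ^ j % p ≤ r / p ^ j % p) ∧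
            P = X 0 ^ i * X 1 ^ (r - i)} := by
  haveI : Fact p.Prime := ⟨hp⟩
  apply le_antisymm
  · rw [Submodule.span_le]
    rintro P ⟨a, rfl⟩
    rw [SetLike.mem_coe, add_pow]
    refine Submodule.sum_mem _ fun m hm => ?_
    have hm' : m ≤ r := Nat.lt_succ_iff.mp (mem_range.mp hm)
    by_cases hd : ∀ j : ℕ, m / p ^ j % p ≤ r / p ^ j % p
    · have heq : (C (ι a) * X 0) ^ m * X 1 ^ (r - m) * (r.choose m : MvPolynomial (Fin 2) K)
          = (ι a ^ m * (r.choose m : K)) • (X 0 ^ m * X 1 ^ (r - m)) := by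
        rw [smul_eq_C_mul, map_mul, map_pow,
          ← map_natCast (C : K →+* MvPolynomial (Fin 2) K) (r.choose m)]
        ring
      rw [heq]
      exact Submodule.smul_mem _ _ (Submodule.subset_span ⟨m, hm', hd, rfl⟩)
    · have hdvd : p ∣ r.choose m := by
        by_contra h
        exact hd ((lucas_not_dvd hp hm' hr).mp h)
      have hz : ((r.choose m : ℕ) : MvPolynomial (Fin 2) K) = 0 := by
        rw [← map_natCast (C : K →+* MvPolynomial (Fin 2) K),
          (CharP.cast_eq_zero_iff K p _).mpr hdvd, map_zero]
      rw [hz, mul_zero]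
      exact Submodule.zero_mem _
  · rw [Submodule.span_le]
    rintro P ⟨i, hir, hdig, rfl⟩
    have e : 𝔽 ≃ Fin (p ^ n) := Fintype.equivFinOfCardEq hF
    set v : Fin (p ^ n) → K := fun k => ι (e.symm k) with hv
    have hvinj : Function.Injective v := fun a b hab =>
      e.symm.injective (ι.injective hab)
    set M := Matrix.vandermonde v with hM
    have hdet : IsUnit M.det := by
      rw [isUnit_iff_ne_zero, hM, Matrix.det_vandermonde_ne_zero_iff]
      exact hvinj
    have hMinv : M⁻¹ * M = 1 := Matrix.nonsing_inv_mul M hdet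
    have hiq : i < p ^ n := lt_of_le_of_lt hir hr
    set i' : Fin (p ^ n) := ⟨i, hiq⟩ with hi'
    set c : Fin (p ^ n) → K := fun k => M⁻¹ i' k with hc
    have hdelta : ∀ m : ℕ, m ≤ r →
        (∑ k : Fin (p ^ n), c k * v k ^ m) = if m = i then 1 else 0 := by
      intro m hm
      have hmq : m < p ^ n := lt_of_le_of_lt hm hr
      have h1 : (∑ k : Fin (p ^ n), c k * v k ^ m) = (M⁻¹ * M) i' ⟨m, hmq⟩ := by
        rw [Matrix.mul_apply]
        rfl
      rw [h1, hMinv, Matrix.one_apply]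
      simp [hi', Fin.ext_iff, eq_comm]
    have hch : (r.choose i : K) ≠ 0 := by
      intro h
      rw [CharP.cast_eq_zero_iff K p] at h
      exact ((lucas_not_dvd hp hir hr).mpr hdig) h
    have hsum : (∑ k : Fin (p ^ n), C (c k) * (C (v k) * X (0 : Fin 2) + X 1) ^ r)
        = C (r.choose i : K) * (X (0 : Fin 2) ^ i * X 1 ^ (r - i)) := by
      have hterm : ∀ k : Fin (p ^ n), C (c k) * (C (v k) * X (0 : Fin 2) + X 1) ^ r
          = ∑ m ∈ range (r + 1),
              C (c k * v k ^ m * (r.choose m : K)) * (X (0 : Fin 2) ^ m * X 1 ^ (r - m)) := by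
        intro k
        rw [add_pow, Finset.mul_sum]
        refine Finset.sum_congr rfl fun m hm => ?_
        rw [map_mul, map_mul, map_pow]
        simp only [map_natCast]
        ring
      simp_rw [hterm]
      rw [Finset.sum_comm, Finset.sum_eq_single i]
      · rw [← Finset.sum_mul, ← map_sum, ← Finset.sum_mul, hdelta i hir]
        simp
      · intro b hb hbne
        rw [← Finset.sum_mul, ← map_sum, ← Finset.sum_mul,
          hdelta b (Nat.lt_succ_iff.mp (mem_range.mp hb))]
        simp [hbne]
      · intro h; exact absurd (mem_range.mpr (Nat.lt_succ_of_le hir)) h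
    refine span_mem_of_sum_C_mul (fun k => (C (v k) * X (0 : Fin 2) + X 1) ^ r) ?_ c _ hch _ hsum
    intro k
    exact Submodule.subset_span ⟨e.symm k, rfl⟩
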